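/- For the partial order consisting of a chain of n elements together with one additional incomparable element v, any 3-hitting family must contain all n+1 linearizations: for each i ∈ {0,...,n}, the schedule placing v between positions i and i+1 of the chain is the unique schedule hitting some admissible triple, so the smallest 3-hitting family has size exactly n+1. -/

import Mathlib

/-- A schedule for a partial order is a linear extension: a linear order
relation `r` that extends the partial order. -/
def IsSchedule {α : Type*} [PartialOrder α] (r : α → α → Prop) : Prop :=
  IsLinearOrder α r ∧ ∀ x y : α, x ≤ y → r x y

/-- A schedule `r` hits the tuple `a` if it orders `a 0, a 1, ...` in this order. -/
def Hits {α : Type*} (r : α → α → Prop) {d : ℕ} (a : Fin d → α) : Prop :=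
  ∀ i j : Fin d, i < j → r (a i) (a j)

/-- A `d`-tuple of distinct events is admissible if no later component is
strictly below an earlier one. -/
def Admissible {α : Type*} [PartialOrder α] {d : ℕ} (a : Fin d → α) : Prop :=
  Function.Injective a ∧ ∀ i j : Fin d, i < j → ¬ (a j < a i)

/-- A family of schedules (indexed by `Fin k`) is `d`-hitting if every member is a
schedule and every admissible `d`-tuple is hit by some member. -/
def IsHittingFamily {α : Type*} [PartialOrder α] {k : ℕ} (F : Fin k → (α → α → Prop)) (d : ℕ) : Prop :=
  (∀ i, IsSchedule (F i)) ∧ ∀ a : Fin d → α, Admissible a → ∃ i, Hits (F i) a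

/-- The schedule for `Fin n ⊕ Unit` (chain plus incomparable `v`) that runs the chain
in order and inserts `v` right after the first `i` chain elements. -/
def insSched (n i : ℕ) : (Fin n ⊕ Unit) → (Fin n ⊕ Unit) → Prop
  | Sum.inl a, Sum.inl b => a ≤ b
  | Sum.inl a, Sum.inr _ => (a : ℕ) < i
  | Sum.inr _, Sum.inl b => i ≤ (b : ℕ)
  | Sum.inr _, Sum.inr _ => True

theorem insSched_isLinear (n i : ℕ) : IsLinearOrder (Fin n ⊕ Unit) (insSched n i) := by
  refine { refl := ?_, trans := ?_, antisymm := ?_, total := ?_ }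
  · rintro (a | u) <;> simp [insSched]
  · rintro (a | u) (b | v) (c | w) h1 h2 <;>
      simp only [insSched, Fin.le_def] at * <;> omega
  · rintro (a | u) (b | v) h1 h2 <;> simp only [insSched, Fin.le_def] at h1 h2
    · exact congrArg Sum.inl (Fin.le_antisymm (Fin.le_def.2 h1) (Fin.le_def.2 h2))
    · omega
    · omega
    · rfl
  · rintro (a | u) (b | v) <;> simp only [insSched, Fin.le_def]
    · omega
    · omega
    · omega
    · exact Or.inl trivial

theorem insSched_isSchedule (n i : ℕ) : IsSchedule (insSched n i) := by
  refine ⟨insSched_isLinear n i, ?_⟩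
  rintro (a | u) (b | v) h
  · exact Sum.inl_le_inl_iff.1 h
  · rw [Sum.le_def] at h; cases h
  · rw [Sum.le_def] at h; cases h
  · trivial

theorem sched_eq_insSched {n : ℕ} {r : (Fin n ⊕ Unit) → (Fin n ⊕ Unit) → Prop}
    (hr : IsSchedule r) (i : ℕ)
    (hlt : ∀ a : Fin n, (a : ℕ) < i → r (Sum.inl a) (Sum.inr ()))
    (hge : ∀ a : Fin n, i ≤ (a : ℕ) → r (Sum.inr ()) (Sum.inl a)) :
    r = insSched n i := by
  obtain ⟨hlin, hext⟩ := hr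
  haveI := hlin
  have hchain : ∀ a b : Fin n, a ≤ b → r (Sum.inl a) (Sum.inl b) := fun a b h =>
    hext _ _ (Sum.inl_le_inl_iff.2 h)
  have htot : ∀ x y, r x y ∨ r y x := Std.Total.total (r := r)
  have hanti : ∀ x y, r x y → r y x → x = y := Std.Antisymm.antisymm (r := r)
  funext x y
  apply propext
  rcases x with a | u <;> rcases y with b | v
  · show r (Sum.inl a) (Sum.inl b) ↔ a ≤ b
    constructor
    · intro h
      by_contra hab
      have hba : b ≤ a := le_of_not_ge hab
      have := hanti _ _ h (hchain b a hba)
      have hab' : a = b := by injection this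
      exact hab (le_of_eq hab')
    · exact hchain a b
  · cases v
    show r (Sum.inl a) (Sum.inr ()) ↔ (a : ℕ) < i
    constructor
    · intro h
      by_contra hai
      have := hanti _ _ h (hge a (by omega))
      exact Sum.inl_ne_inr this
    · exact hlt a
  · cases u
    show r (Sum.inr ()) (Sum.inl b) ↔ i ≤ (b : ℕ)
    constructor
    · intro h
      by_contra hbi
      have := hanti _ _ h (hlt b (by omega))
      exact Sum.inr_ne_inl this
    · exact hge b
  · cases u; cases v
    simp only [insSched, iff_true]
    exact Std.Refl.refl (r := r) _

theorem hits3 {α : Type*} (r : α → α → Prop) (x y z : α)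
    (h01 : r x y) (h02 : r x z) (h12 : r y z) : Hits r ![x, y, z] := by
  intro p q hpq
  fin_cases p <;> fin_cases q <;>
    first
      | exact absurd hpq (by decide)
      | exact h01
      | exact h02
      | exact h12

theorem adm3 {α : Type*} [PartialOrder α] (x y z : α)
    (hxy : x ≠ y) (hxz : x ≠ z) (hyz : y ≠ z)
    (h1 : ¬ y < x) (h2 : ¬ z < x) (h3 : ¬ z < y) : Admissible ![x, y, z] := by
  constructor
  · intro p q h
    fin_cases p <;> fin_cases q <;> simp_all
  · intro p q hpq
    fin_cases p <;> fin_cases q <;> simp_all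

theorem chainPlus_three_hitting_minimum (n : ℕ) (hn : 2 ≤ n) :
    (∀ (k : ℕ) (F : Fin k → ((Fin n ⊕ Unit) → (Fin n ⊕ Unit) → Prop)),
      IsHittingFamily F 3 →
        (∀ i : Fin (n + 1), ∃ j : Fin k, F j = insSched n i) ∧ n + 1 ≤ k) ∧
    IsHittingFamily (fun i : Fin (n + 1) => insSched n (i : ℕ)) 3 := by
  constructor
  · intro k F hF
    have main : ∀ i : Fin (n + 1), ∃ j : Fin k, F j = insSched n (i : ℕ) := by
      intro i
      have hiv : (i : ℕ) ≤ n := by omega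
      rcases eq_or_lt_of_le (Nat.zero_le (i : ℕ)) with h0 | hpos
      · -- i = 0 : triple (v, inl 0, inl 1)
        set x : Fin n := ⟨0, by omega⟩
        set y : Fin n := ⟨1, by omega⟩
        have hadm : Admissible ![(Sum.inr () : Fin n ⊕ Unit), Sum.inl x, Sum.inl y] := by
          refine adm3 _ _ _ (by simp) (by simp) ?_ Sum.not_inl_lt_inr Sum.not_inl_lt_inr ?_
          · simp [x, y, Fin.ext_iff]
          · rw [Sum.inl_lt_inl_iff]
            simp [x, y, Fin.lt_def]
        obtain ⟨j, hj⟩ := hF.2 _ hadm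
        haveI := (hF.1 j).1
        refine ⟨j, sched_eq_insSched (hF.1 j) _ (fun a ha => by omega) ?_⟩
        intro a _
        have h01 : F j (Sum.inr ()) (Sum.inl x) := hj 0 1 (by decide)
        have hxa : F j (Sum.inl x) (Sum.inl a) :=
          (hF.1 j).2 _ _ (Sum.inl_le_inl_iff.2 (by simp [x, Fin.le_def]))
        exact IsTrans.trans (r := F j) _ _ _ h01 hxa
      · rcases eq_or_lt_of_le hiv with hn' | hlt'
        · -- i = n : triple (inl (n-2), inl (n-1), v)
          set x : Fin n := ⟨n - 2, by omega⟩
          set y : Fin n := ⟨n - 1, by omega⟩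
          have hadm : Admissible ![(Sum.inl x : Fin n ⊕ Unit), Sum.inl y, Sum.inr ()] := by
            refine adm3 _ _ _ ?_ (by simp) (by simp) ?_ Sum.not_inr_lt_inl Sum.not_inr_lt_inl
            · simp only [ne_eq, Sum.inl.injEq]
              simp [x, y, Fin.ext_iff] <;> omega
            · rw [Sum.inl_lt_inl_iff]
              simp [x, y, Fin.lt_def] <;> omega
          obtain ⟨j, hj⟩ := hF.2 _ hadm
          haveI := (hF.1 j).1
          refine ⟨j, sched_eq_insSched (hF.1 j) _ ?_ (fun a ha => by omega)⟩
          intro a ha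
          have h12 : F j (Sum.inl y) (Sum.inr ()) := hj 1 2 (by decide)
          have hay : F j (Sum.inl a) (Sum.inl y) :=
            (hF.1 j).2 _ _ (Sum.inl_le_inl_iff.2 (by simp [y, Fin.le_def]; omega))
          exact IsTrans.trans (r := F j) _ _ _ hay h12
        · -- 0 < i < n : triple (inl (i-1), v, inl i)
          set x : Fin n := ⟨(i : ℕ) - 1, by omega⟩
          set y : Fin n := ⟨(i : ℕ), by omega⟩
          have hadm : Admissible ![(Sum.inl x : Fin n ⊕ Unit), Sum.inr (), Sum.inl y] := by
            refine adm3 _ _ _ (by simp) ?_ (by simp) Sum.not_inr_lt_inl ?_ Sum.not_inl_lt_inr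
            · simp only [ne_eq, Sum.inl.injEq]
              simp [x, y, Fin.ext_iff] <;> omega
            · rw [Sum.inl_lt_inl_iff]
              simp [x, y, Fin.lt_def] <;> omega
          obtain ⟨j, hj⟩ := hF.2 _ hadm
          haveI := (hF.1 j).1
          have h01 : F j (Sum.inl x) (Sum.inr ()) := hj 0 1 (by decide)
          have h12 : F j (Sum.inr ()) (Sum.inl y) := hj 1 2 (by decide)
          refine ⟨j, sched_eq_insSched (hF.1 j) _ ?_ ?_⟩
          · intro a ha
            have hax : F j (Sum.inl a) (Sum.inl x) :=
              (hF.1 j).2 _ _ (Sum.inl_le_inl_iff.2 (by simp [x, Fin.le_def]; omega))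
            exact IsTrans.trans (r := F j) _ _ _ hax h01
          · intro a ha
            have hya : F j (Sum.inl y) (Sum.inl a) :=
              (hF.1 j).2 _ _ (Sum.inl_le_inl_iff.2 (by simp [y, Fin.le_def]; omega))
            exact IsTrans.trans (r := F j) _ _ _ h12 hya
    refine ⟨main, ?_⟩
    choose g hg using main
    have hginj : Function.Injective g := by
      intro i i' h
      have heq : insSched n (i : ℕ) = insSched n (i' : ℕ) := by
        rw [← hg i, ← hg i', h]
      by_contra hne
      have hvne : (i : ℕ) ≠ (i' : ℕ) := fun h' => hne (Fin.ext h')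
      have key : ∀ p q : ℕ, p < q → q ≤ n → insSched n p = insSched n q → False := by
        intro p q hpq hqn he
        have := congrFun (congrFun he (Sum.inl ⟨p, by omega⟩)) (Sum.inr ())
        simp only [insSched] at this
        rw [eq_iff_iff] at this
        omega
      rcases lt_or_gt_of_ne hvne with hlt | hgt
      · exact key _ _ hlt (by omega) heq
      · exact key _ _ hgt (by omega) heq.symm
    simpa using Fintype.card_le_of_injective g hginj
  · constructor
    · intro i
      exact insSched_isSchedule n (i : ℕ)
    · intro a ha
      have hle : ∀ (p q : Fin 3) (x y : Fin n), p < q →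
          a p = Sum.inl x → a q = Sum.inl y → (x : ℕ) ≤ (y : ℕ) := by
        intro p q x y hpq hp hq
        have h := ha.2 p q hpq
        rw [hp, hq] at h
        have : ¬ ((y : ℕ) < (x : ℕ)) := fun h' =>
          h (Sum.inl_lt_inl_iff.2 (Fin.lt_def.2 h'))
        omega
      have hone : ∀ (p q : Fin 3), p ≠ q → a p = Sum.inr () → a q = Sum.inr () → False := by
        intro p q hpq hp hq
        exact hpq (ha.1 (hp.trans hq.symm))
      have ha3 : a = ![a 0, a 1, a 2] := by
        funext p; fin_cases p <;> rfl
      rcases h0 : a 0 with x0 | u0 <;> rcases h1 : a 1 with x1 | u1 <;>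
        rcases h2 : a 2 with x2 | u2
      · -- inl inl inl : use i = 0
        refine ⟨0, ?_⟩
        rw [ha3, h0, h1, h2]
        exact hits3 _ _ _ _
          (show (x0 : Fin n) ≤ x1 from Fin.le_def.2 (hle 0 1 x0 x1 (by decide) h0 h1))
          (show (x0 : Fin n) ≤ x2 from Fin.le_def.2 (hle 0 2 x0 x2 (by decide) h0 h2))
          (show (x1 : Fin n) ≤ x2 from Fin.le_def.2 (hle 1 2 x1 x2 (by decide) h1 h2))
      · -- inl inl inr : use i = x1 + 1
        cases u2
        refine ⟨⟨(x1 : ℕ) + 1, by omega⟩, ?_⟩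
        rw [ha3, h0, h1, h2]
        have h01 : (x0 : ℕ) ≤ (x1 : ℕ) := hle 0 1 x0 x1 (by decide) h0 h1
        exact hits3 _ _ _ _
          (show (x0 : Fin n) ≤ x1 from Fin.le_def.2 h01)
          (show (x0 : ℕ) < (x1 : ℕ) + 1 by omega)
          (show (x1 : ℕ) < (x1 : ℕ) + 1 by omega)
      · -- inl inr inl : use i = x0 + 1
        cases u1
        have h02 : (x0 : ℕ) ≤ (x2 : ℕ) := hle 0 2 x0 x2 (by decide) h0 h2
        have hne02 : (x0 : ℕ) ≠ (x2 : ℕ) := by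
          intro h
          have heq : a 0 = a 2 := by rw [h0, h2]; exact congrArg Sum.inl (Fin.ext h)
          have := ha.1 heq
          simp at this
        refine ⟨⟨(x0 : ℕ) + 1, by omega⟩, ?_⟩
        rw [ha3, h0, h1, h2]
        exact hits3 _ _ _ _
          (show (x0 : ℕ) < (x0 : ℕ) + 1 by omega)
          (show (x0 : Fin n) ≤ x2 from Fin.le_def.2 h02)
          (show (x0 : ℕ) + 1 ≤ (x2 : ℕ) by omega)
      · exact absurd (hone 1 2 (by decide) (by rw [h1]) (by rw [h2])) (by simp)
      · -- inr inl inl : use i = 0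
        cases u0
        refine ⟨0, ?_⟩
        rw [ha3, h0, h1, h2]
        exact hits3 _ _ _ _
          (show (0 : ℕ) ≤ (x1 : ℕ) by omega)
          (show (0 : ℕ) ≤ (x2 : ℕ) by omega)
          (show (x1 : Fin n) ≤ x2 from Fin.le_def.2 (hle 1 2 x1 x2 (by decide) h1 h2))
      · exact absurd (hone 0 2 (by decide) (by rw [h0]) (by rw [h2])) (by simp)
      · exact absurd (hone 0 1 (by decide) (by rw [h0]) (by rw [h1])) (by simp)
      · exact absurd (hone 0 1 (by decide) (by rw [h0]) (by rw [h1])) (by simp)
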